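/- arXiv:1310.6681 — 3 statements merged into one kernel-verified Lean document; each statement's English description precedes it below -/
import Mathlib

section
/- Infrared limit of the resummed pure coherent spectrum: for f(ω_1) = b P(ω_1/ω_0)·1_{(0,ω_0)}(ω_1) with P continuous, the compound Poisson density g satisfies g(0⁺) = e^{-w_1} b P(0), where w_1 = b∫_0^{ω_0} P(ω_1/ω_0)dω_1. -/
open MeasureTheory Real Filter

/-- `convPow f n` is the `(n+1)`-fold self-convolution `f^{*(n+1)}` of `f`. -/
noncomputable def convPow (f : ℝ → ℝ) : ℕ → ℝ → ℝ
  | 0 => f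
  | n + 1 => fun ω => ∫ t : ℝ, f t * convPow f n (ω - t)

lemma convPow_props (f : ℝ → ℝ) (M : ℝ)
    (hfi : Integrable f) (hfnn : ∀ ω, 0 ≤ f ω) (hf0 : ∀ ω ≤ (0:ℝ), f ω = 0)
    (hfb : ∀ ω, f ω ≤ M) :
    ∀ n : ℕ, Integrable (convPow f n) ∧ (∀ ω, 0 ≤ convPow f n ω) ∧
      (∀ ω ≤ (0:ℝ), convPow f n ω = 0) ∧
      (∀ ω : ℝ, 0 ≤ ω → convPow f n ω ≤ M ^ (n+1) * ω ^ n / n.factorial) := by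
  have hM : 0 ≤ M := le_trans (hfnn 0) (hfb 0)
  intro n
  induction n with
  | zero =>
    refine ⟨hfi, hfnn, hf0, ?_⟩
    intro ω _
    simpa [convPow] using hfb ω
  | succ n ih =>
    obtain ⟨ihi, ihnn, ih0, ihb⟩ := ih
    have hzero : ∀ ω : ℝ, ω ≤ 0 → convPow f (n+1) ω = 0 := by
      intro ω hω
      show (∫ t : ℝ, f t * convPow f n (ω - t)) = 0
      have h : ∀ t : ℝ, f t * convPow f n (ω - t) = 0 := by
        intro t
        rcases le_or_gt t 0 with h | h
        · rw [hf0 t h, zero_mul]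
        · rw [ih0 (ω - t) (by linarith), mul_zero]
      simp [h]
    have hint : Integrable (convPow f (n+1)) := by
      have heq : convPow f (n+1)
          = convolution f (convPow f n) (ContinuousLinearMap.mul ℝ ℝ) volume := by
        funext ω
        simp [convPow, convolution_def]
      rw [heq]
      exact hfi.integrable_convolution _ ihi
    refine ⟨hint, ?_, hzero, ?_⟩
    · intro ω
      show 0 ≤ ∫ t : ℝ, f t * convPow f n (ω - t)
      exact integral_nonneg fun t => mul_nonneg (hfnn t) (ihnn _)
    · intro ω hω
      show (∫ t : ℝ, f t * convPow f n (ω - t)) ≤ _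
      set C : ℝ := M ^ (n+2) / n.factorial with hC
      have hCnn : 0 ≤ C := by positivity
      have hdom : IntegrableOn (fun t : ℝ => C * (ω - t) ^ n) (Set.Ioo 0 ω) := by
        apply IntegrableOn.mono_set (t := Set.Icc 0 ω)
        · exact (Continuous.integrableOn_Icc (by continuity))
        · exact Set.Ioo_subset_Icc_self
      have hdomi : Integrable ((Set.Ioo (0:ℝ) ω).indicator (fun t => C * (ω - t) ^ n)) :=
        (integrable_indicator_iff measurableSet_Ioo).2 hdom
      have hble : ∀ t : ℝ, f t * convPow f n (ω - t) ≤
          Set.indicator (Set.Ioo 0 ω) (fun t => C * (ω - t) ^ n) t := by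
        intro t
        by_cases ht : t ∈ Set.Ioo 0 ω
        · rw [Set.indicator_of_mem ht]
          have h1 : f t ≤ M := hfb t
          have h2 : convPow f n (ω - t) ≤ M ^ (n+1) * (ω - t) ^ n / n.factorial :=
            ihb _ (by linarith [ht.2])
          calc f t * convPow f n (ω - t)
              ≤ M * (M ^ (n+1) * (ω - t) ^ n / n.factorial) :=
                mul_le_mul h1 h2 (ihnn _) hM
            _ = C * (ω - t) ^ n := by rw [hC]; ring
        · rw [Set.indicator_of_notMem ht]
          by_cases h : 0 < t
          · have hge : ω ≤ t := by
              by_contra hlt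
              exact ht ⟨h, lt_of_not_ge hlt⟩
            rw [ih0 (ω - t) (by linarith), mul_zero]
          · rw [hf0 t (le_of_not_gt h), zero_mul]
      have hmono : (∫ t : ℝ, f t * convPow f n (ω - t)) ≤
          ∫ t : ℝ, Set.indicator (Set.Ioo 0 ω) (fun t => C * (ω - t) ^ n) t :=
        integral_mono_of_nonneg
          (Filter.Eventually.of_forall fun t => mul_nonneg (hfnn t) (ihnn _))
          hdomi (Filter.Eventually.of_forall hble)
      have hval : (∫ t : ℝ, Set.indicator (Set.Ioo 0 ω) (fun t => C * (ω - t) ^ n) t)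
          = C * (ω ^ (n+1) / (n+1)) := by
        rw [integral_indicator measurableSet_Ioo]
        rw [← MeasureTheory.integral_Ioc_eq_integral_Ioo,
          ← intervalIntegral.integral_of_le hω]
        rw [intervalIntegral.integral_const_mul]
        congr 1
        rw [intervalIntegral.integral_comp_sub_left (fun x => x ^ n) ω]
        simp [integral_pow]
      rw [hval] at hmono
      refine hmono.trans (le_of_eq ?_)
      have hfac : ((n+1).factorial : ℝ) = (n+1) * n.factorial := by
        rw [Nat.factorial_succ]; push_cast; ring
      have h1 : (n.factorial : ℝ) ≠ 0 := by positivity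
      have h2 : ((n:ℝ) + 1) ≠ 0 := by positivity
      rw [hC, hfac, div_mul_div_comm, mul_comm ((n:ℝ)+1) ((n.factorial : ℝ))]

/-- Infrared limit of the resummed pure coherent spectrum: for
`f(ω₁) = b P(ω₁/ω₀)·1_{(0,ω₀)}(ω₁)` with `P` continuous, the compound Poisson
density `g = e^{-w₁} ∑_{n≥1} f^{*n}/n!` satisfies `g(0⁺) = e^{-w₁} b P(0)`. -/
theorem coherent_spectrum_infrared_limit
    (b ω₀ : ℝ) (hb : 0 < b) (hω₀ : 0 < ω₀)
    (P : ℝ → ℝ) (hP_cont : ContinuousOn P (Set.Icc 0 1))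
    (hP_nonneg : ∀ z ∈ Set.Icc (0:ℝ) 1, 0 ≤ P z)
    (f : ℝ → ℝ)
    (hf : ∀ ω, f ω = if ω ∈ Set.Ioo 0 ω₀ then b * P (ω / ω₀) else 0)
    (w₁ : ℝ) (hw₁ : w₁ = b * ∫ ω in Set.Ioo (0:ℝ) ω₀, P (ω / ω₀))
    (g : ℝ → ℝ)
    (hg : ∀ ω, g ω = Real.exp (-w₁) * ∑' n : ℕ, convPow f n ω / (n + 1).factorial) :
    Filter.Tendsto g (nhdsWithin 0 (Set.Ioi 0))
      (nhds (Real.exp (-w₁) * b * P 0)) := by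
  -- bound for P
  obtain ⟨K, hK⟩ := (isCompact_Icc).exists_bound_of_continuousOn hP_cont
  have hK0 : 0 ≤ K := le_trans (norm_nonneg _) (hK 0 ⟨le_refl 0, zero_le_one⟩)
  set M : ℝ := b * K with hM
  have hMnn : 0 ≤ M := mul_nonneg hb.le hK0
  have hmem : ∀ ω ∈ Set.Ioo (0:ℝ) ω₀, ω / ω₀ ∈ Set.Icc (0:ℝ) 1 := by
    intro ω hω
    exact ⟨div_nonneg hω.1.le hω₀.le, (div_le_one hω₀).2 hω.2.le⟩
  -- basic properties of f
  have hfnn : ∀ ω, 0 ≤ f ω := by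
    intro ω
    rw [hf ω]
    split_ifs with h
    · exact mul_nonneg hb.le (hP_nonneg _ (hmem ω h))
    · exact le_refl 0
  have hf0 : ∀ ω ≤ (0:ℝ), f ω = 0 := by
    intro ω hω
    rw [hf ω, if_neg]
    simp only [Set.mem_Ioo, not_and_or]
    left; linarith
  have hfb : ∀ ω, f ω ≤ M := by
    intro ω
    rw [hf ω]
    split_ifs with h
    · exact mul_le_mul_of_nonneg_left
        ((le_abs_self _).trans (hK _ (hmem ω h))) hb.le
    · exact hMnn
  have hfi : Integrable f := by
    have hfeq : f = (Set.Ioo (0:ℝ) ω₀).indicator (fun ω => b * P (ω / ω₀)) := by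
      funext ω
      rw [hf ω, Set.indicator_apply]
    rw [hfeq]
    rw [integrable_indicator_iff measurableSet_Ioo]
    apply IntegrableOn.mono_set (t := Set.Icc 0 ω₀)
    · apply ContinuousOn.integrableOn_Icc
      apply ContinuousOn.mul continuousOn_const
      apply hP_cont.comp (Continuous.continuousOn (by continuity))
      intro x hx
      exact ⟨div_nonneg hx.1 hω₀.le, (div_le_one hω₀).2 hx.2⟩
    · exact Set.Ioo_subset_Icc_self
  obtain hprops := convPow_props f M hfi hfnn hf0 hfb
  -- the constant for the tail bound
  set D : ℝ := ∑' n : ℕ, M ^ (n+2) / n.factorial with hD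
  have hDsum : Summable (fun n : ℕ => M ^ (n+2) / n.factorial) := by
    have := (Real.summable_pow_div_factorial M).mul_left (M ^ 2)
    apply this.congr
    intro n
    rw [← mul_div_assoc, ← pow_add]
    ring_nf
  -- key decomposition for ω ∈ (0,1)
  have key : ∀ ω : ℝ, ω ∈ Set.Ioo (0:ℝ) 1 →
      Real.exp (-w₁) * f ω ≤ g ω ∧
      g ω ≤ Real.exp (-w₁) * f ω + Real.exp (-w₁) * (ω * D) := by
    intro ω hω
    have hω0 : (0:ℝ) < ω := hω.1
    have hω1 : ω ≤ 1 := hω.2.le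
    set a : ℕ → ℝ := fun n => convPow f n ω / (n + 1).factorial with ha
    have hann : ∀ n, 0 ≤ a n := fun n =>
      div_nonneg ((hprops n).2.1 ω) (by positivity)
    have hbound : ∀ n : ℕ, a n ≤ M * ((M * ω) ^ n / n.factorial) := by
      intro n
      have h1 : a n ≤ convPow f n ω := by
        apply div_le_self ((hprops n).2.1 ω)
        exact_mod_cast Nat.one_le_iff_ne_zero.2 (Nat.factorial_ne_zero _)
      refine h1.trans (((hprops n).2.2.2 ω hω0.le).trans (le_of_eq ?_))
      rw [mul_pow, ← mul_div_assoc, pow_succ]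
      ring
    have hsum : Summable a := by
      apply Summable.of_nonneg_of_le hann hbound
      exact ((Real.summable_pow_div_factorial (M * ω)).mul_left M)
    have hsplit : (∑' n : ℕ, a n) = a 0 + ∑' n : ℕ, a (n + 1) :=
      hsum.tsum_eq_zero_add
    have ha0 : a 0 = f ω := by
      simp [ha, convPow]
    have htail_nn : 0 ≤ ∑' n : ℕ, a (n + 1) :=
      tsum_nonneg fun n => hann _
    have htail_le : (∑' n : ℕ, a (n + 1)) ≤ ω * D := by
      have hsum' : Summable (fun n : ℕ => a (n + 1)) :=
        (summable_nat_add_iff 1).2 hsum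
      have hsumD : Summable (fun n : ℕ => ω * (M ^ (n+2) / n.factorial)) :=
        hDsum.mul_left ω
      have hDa : ∀ n : ℕ, a (n + 1) ≤ ω * (M ^ (n+2) / n.factorial) := by
        intro n
        have h1 : a (n + 1) ≤ convPow f (n+1) ω := by
          apply div_le_self ((hprops (n+1)).2.1 ω)
          exact_mod_cast Nat.one_le_iff_ne_zero.2 (Nat.factorial_ne_zero _)
        refine h1.trans (((hprops (n+1)).2.2.2 ω hω0.le).trans ?_)
        have hωpow : ω ^ (n+1) ≤ ω := pow_le_of_le_one hω0.le hω1 (Nat.succ_ne_zero n)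
        have hfle : (n.factorial : ℝ) ≤ (n+1).factorial := by
          exact_mod_cast Nat.factorial_le (Nat.le_succ n)
        calc M ^ (n+2) * ω ^ (n+1) / (n+1).factorial
            ≤ M ^ (n+2) * ω / n.factorial := by
              apply div_le_div₀ (by positivity)
                (mul_le_mul_of_nonneg_left hωpow (by positivity))
                (by positivity) hfle
          _ = ω * (M ^ (n+2) / n.factorial) := by ring
      calc (∑' n : ℕ, a (n + 1)) ≤ ∑' n : ℕ, ω * (M ^ (n+2) / n.factorial) :=
            Summable.tsum_le_tsum hDa hsum' hsumD
        _ = ω * D := by rw [hD, ← tsum_mul_left]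
    have hgω : g ω = Real.exp (-w₁) * (f ω + ∑' n : ℕ, a (n + 1)) := by
      rw [hg ω]
      congr 1
      rw [hsplit, ha0]
    constructor
    · rw [hgω]
      have : f ω ≤ f ω + ∑' n : ℕ, a (n + 1) := by linarith
      exact mul_le_mul_of_nonneg_left this (Real.exp_nonneg _)
    · rw [hgω, mul_add]
      have := mul_le_mul_of_nonneg_left htail_le (Real.exp_nonneg (-w₁))
      linarith
  -- limits of the bounding functions
  have hPc0 : ContinuousWithinAt P (Set.Icc 0 1) 0 :=
    hP_cont 0 ⟨le_refl 0, zero_le_one⟩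
  have hdiv : Tendsto (fun ω : ℝ => ω / ω₀) (nhdsWithin 0 (Set.Ioi 0))
      (nhdsWithin 0 (Set.Icc 0 1)) := by
    apply tendsto_nhdsWithin_of_tendsto_nhds_of_eventually_within
    · have : Tendsto (fun ω : ℝ => ω / ω₀) (nhds 0) (nhds (0 / ω₀)) :=
        tendsto_id.div_const ω₀
      simpa using this.mono_left nhdsWithin_le_nhds
    · filter_upwards [Ioo_mem_nhdsGT_of_mem (Set.left_mem_Ico.2 hω₀)] with x hx
      exact hmem x hx
  have hfP : Tendsto f (nhdsWithin 0 (Set.Ioi 0)) (nhds (b * P 0)) := by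
    have h1 : Tendsto (fun ω : ℝ => b * P (ω / ω₀)) (nhdsWithin 0 (Set.Ioi 0))
        (nhds (b * P 0)) := (hPc0.tendsto.comp hdiv).const_mul b
    apply h1.congr'
    filter_upwards [Ioo_mem_nhdsGT_of_mem (Set.left_mem_Ico.2 hω₀)] with x hx
    rw [hf x, if_pos hx]
  have hlow : Tendsto (fun ω => Real.exp (-w₁) * f ω) (nhdsWithin 0 (Set.Ioi 0))
      (nhds (Real.exp (-w₁) * b * P 0)) := by
    have := hfP.const_mul (Real.exp (-w₁))
    simpa [mul_assoc] using this
  have hup : Tendsto (fun ω => Real.exp (-w₁) * f ω + Real.exp (-w₁) * (ω * D))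
      (nhdsWithin 0 (Set.Ioi 0)) (nhds (Real.exp (-w₁) * b * P 0)) := by
    have h2 : Tendsto (fun ω : ℝ => Real.exp (-w₁) * (ω * D))
        (nhdsWithin 0 (Set.Ioi 0)) (nhds 0) := by
      have : Tendsto (fun ω : ℝ => Real.exp (-w₁) * (ω * D)) (nhds 0)
          (nhds (Real.exp (-w₁) * (0 * D))) := by
        exact ((tendsto_id.mul_const D).const_mul _)
      simpa using this.mono_left nhdsWithin_le_nhds
    simpa using hlow.add h2
  apply tendsto_of_tendsto_of_tendsto_of_le_of_le' hlow hup
  · filter_upwards [Ioo_mem_nhdsGT_of_mem (Set.left_mem_Ico.2 one_pos)] with x hx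
    exact (key x hx).1
  · filter_upwards [Ioo_mem_nhdsGT_of_mem (Set.left_mem_Ico.2 one_pos)] with x hx
    exact (key x hx).2
end

section
/- Discontinuity of the resummed coherent spectrum at the coherent edge: with f(ω_1) = bP(ω_1/ω_0)1_{(0,ω_0)} and P continuous with P(1) > 0, the resummed density g = e^{-w_1}Σ_{n≥1} f^{*n}/n! has jump discontinuity at ω = ω_0 equal to Δ = bP(1) e^{-w_1}; all terms with n ≥ 2 are continuous at ω_0. -/
open MeasureTheory Real Filter

lemma conv_bound_aux (f g : ℝ → ℝ) (hf : Integrable f volume) (M : ℝ)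
    (hg_bd : ∀ x, |g x| ≤ M) (ω : ℝ) :
    |∫ t : ℝ, f t * g (ω - t)| ≤ (∫ t : ℝ, |f t|) * M := by
  calc |∫ t : ℝ, f t * g (ω - t)| ≤ ∫ t : ℝ, |f t| * |g (ω - t)| := by
        simpa [Real.norm_eq_abs] using
          norm_integral_le_integral_norm (μ := volume) (fun t : ℝ => f t * g (ω - t))
    _ ≤ ∫ t : ℝ, |f t| * M := by
        apply integral_mono_of_nonneg
        · filter_upwards with t using mul_nonneg (abs_nonneg _) (abs_nonneg _)
        · exact hf.norm.mul_const M
        · filter_upwards with t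
          exact mul_le_mul_of_nonneg_left (hg_bd _) (abs_nonneg _)
    _ = (∫ t : ℝ, |f t|) * M := integral_mul_const M _

lemma conv_cont_aux (f g : ℝ → ℝ) (hf : Integrable f volume) (hgm : Measurable g)
    (M : ℝ) (hg_bd : ∀ x, |g x| ≤ M) (S : Set ℝ) (hSm : MeasurableSet S) (hS : volume S = 0)
    (hg_cont : ∀ x ∉ S, ContinuousAt g x) :
    Continuous (fun ω => ∫ t : ℝ, f t * g (ω - t)) := by
  rw [continuous_iff_continuousAt]
  intro ω
  apply continuousAt_of_dominated (bound := fun t => |f t| * M)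
  · filter_upwards with ω'
    exact hf.1.mul ((hgm.comp (measurable_const.sub measurable_id)).aestronglyMeasurable)
  · filter_upwards with ω'
    filter_upwards with t
    rw [Real.norm_eq_abs, abs_mul]
    exact mul_le_mul_of_nonneg_left (hg_bd _) (abs_nonneg _)
  · exact hf.norm.mul_const M
  · have hnull : volume ((fun t : ℝ => ω - t) ⁻¹' S) = 0 := by
      rw [(Measure.measurePreserving_sub_left volume ω).measure_preimage hSm.nullMeasurableSet]
      exact hS
    filter_upwards [measure_eq_zero_iff_ae_notMem.mp hnull] with t ht
    have : ContinuousAt (fun ω' : ℝ => g (ω' - t)) ω :=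
      ContinuousAt.comp (by simpa using hg_cont _ ht) (continuousAt_id.sub continuousAt_const)
    exact continuousAt_const.mul this

/-- Discontinuity of the resummed coherent spectrum at the coherent edge: with
`f(ω₁) = bP(ω₁/ω₀)1_{(0,ω₀)}` and `P` continuous with `P(1) > 0`, all
self-convolutions `f^{*n}` with `n ≥ 2` are continuous on `(0,∞)`, and the
resummed density `g = e^{-w₁}∑_{n≥1} f^{*n}/n!` has one-sided limits at
`ω = ω₀` whose jump equals `Δ = bP(1) e^{-w₁}`. -/
theorem coherent_spectrum_edge_discontinuity
    (b ω₀ : ℝ) (hb : 0 < b) (hω₀ : 0 < ω₀)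
    (P : ℝ → ℝ) (hP_cont : ContinuousOn P (Set.Icc 0 1))
    (hP_nonneg : ∀ z ∈ Set.Icc (0:ℝ) 1, 0 ≤ P z) (hP1 : 0 < P 1)
    (f : ℝ → ℝ)
    (hf : ∀ ω, f ω = if ω ∈ Set.Ioo 0 ω₀ then b * P (ω / ω₀) else 0)
    (w₁ : ℝ) (hw₁ : w₁ = b * ∫ ω in Set.Ioo (0:ℝ) ω₀, P (ω / ω₀))
    (g : ℝ → ℝ)
    (hg : ∀ ω, g ω = Real.exp (-w₁) * ∑' n : ℕ, convPow f n ω / (n + 1).factorial) :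
    (∀ n : ℕ, 1 ≤ n → ContinuousOn (convPow f n) (Set.Ioi 0)) ∧
    (∃ gm gp : ℝ,
      Filter.Tendsto g (nhdsWithin ω₀ (Set.Iio ω₀)) (nhds gm) ∧
      Filter.Tendsto g (nhdsWithin ω₀ (Set.Ioi ω₀)) (nhds gp) ∧
      gm - gp = b * P 1 * Real.exp (-w₁)) := by
  -- clamped version of P
  -- the clamped version of `P`, continuous on all of `ℝ`
  set Q : ℝ → ℝ := fun z => P (max 0 (min 1 z)) with hQdef
  have hQ : Continuous Q := by
    apply hP_cont.comp_continuous (continuous_const.max (continuous_const.min continuous_id))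
    intro x
    exact ⟨le_max_left _ _, max_le zero_le_one (min_le_left _ _)⟩
  have hQeq : ∀ z ∈ Set.Icc (0:ℝ) 1, Q z = P z := by
    intro z hz
    simp only [hQdef]
    rw [min_eq_right hz.2, max_eq_right hz.1]
  -- the continuous extension of `f` on `(0, ω₀)`
  set fc : ℝ → ℝ := fun ω => b * Q (ω / ω₀) with hfcdef
  have hfc : Continuous fc := continuous_const.mul (hQ.comp (continuous_id.div_const ω₀))
  have hmemIcc : ∀ ω ∈ Set.Ioo (0:ℝ) ω₀, ω / ω₀ ∈ Set.Icc (0:ℝ) 1 := by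
    intro ω hω
    exact ⟨div_nonneg hω.1.le hω₀.le, (div_le_one hω₀).mpr hω.2.le⟩
  have hf_eq : ∀ ω, f ω = Set.indicator (Set.Ioo 0 ω₀) fc ω := by
    intro ω
    rw [hf]
    by_cases hω : ω ∈ Set.Ioo 0 ω₀
    · rw [if_pos hω, Set.indicator_of_mem hω]
      show b * P (ω / ω₀) = b * Q (ω / ω₀)
      rw [hQeq _ (hmemIcc ω hω)]
    · rw [if_neg hω, Set.indicator_of_notMem hω]
  have hf_eq' : f = Set.indicator (Set.Ioo 0 ω₀) fc := funext hf_eq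
  have hf_meas : Measurable f := by
    rw [hf_eq']
    exact hfc.measurable.indicator measurableSet_Ioo
  have hf_int : Integrable f volume := by
    rw [hf_eq']
    exact ((hfc.continuousOn.integrableOn_Icc).mono_set
      Set.Ioo_subset_Icc_self).integrable_indicator measurableSet_Ioo
  -- bound on `f`
  obtain ⟨C, hC⟩ := isCompact_Icc.exists_bound_of_continuousOn hP_cont
  have hC0 : 0 ≤ C := le_trans (norm_nonneg _) (hC 0 (Set.left_mem_Icc.mpr zero_le_one))
  set M : ℝ := b * C with hMdef
  have hM0 : 0 ≤ M := mul_nonneg hb.le hC0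
  have hf_bd : ∀ x, |f x| ≤ M := by
    intro x
    rw [hf]
    split_ifs with hx
    · rw [abs_mul, abs_of_pos hb]
      exact mul_le_mul_of_nonneg_left (by simpa using hC _ (hmemIcc x hx)) hb.le
    · simpa using hM0
  set I : ℝ := ∫ t : ℝ, |f t| with hIdef
  have hI0 : 0 ≤ I := integral_nonneg fun t => abs_nonneg _
  -- continuity of `f` away from `{0, ω₀}`
  have hf_cont : ∀ x ∉ ({0, ω₀} : Set ℝ), ContinuousAt f x := by
    intro x hx
    simp only [Set.mem_insert_iff, Set.mem_singleton_iff, not_or] at hx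
    rcases lt_trichotomy x 0 with h | h | h
    · have heq : f =ᶠ[nhds x] fun _ => (0:ℝ) := by
        filter_upwards [Iio_mem_nhds h] with y hy
        rw [hf, if_neg]
        exact fun hmem => absurd hmem.1 (not_lt.mpr hy.le)
      exact (continuousAt_congr heq).mpr continuousAt_const
    · exact absurd h hx.1
    · rcases lt_trichotomy x ω₀ with h2 | h2 | h2
      · have heq : f =ᶠ[nhds x] fc := by
          filter_upwards [Ioo_mem_nhds h h2] with y hy
          rw [hf_eq y, Set.indicator_of_mem hy]
        exact (continuousAt_congr heq).mpr hfc.continuousAt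
      · exact absurd h2 hx.2
      · have heq : f =ᶠ[nhds x] fun _ => (0:ℝ) := by
          filter_upwards [Ioi_mem_nhds h2] with y hy
          rw [hf, if_neg]
          exact fun hmem => absurd hmem.2 (not_lt.mpr hy.le)
        exact (continuousAt_congr heq).mpr continuousAt_const
  -- uniform bounds on the self-convolutions
  have hbound : ∀ n : ℕ, ∀ ω, |convPow f n ω| ≤ I ^ n * M := by
    intro n
    induction n with
    | zero => intro ω; simpa [convPow] using hf_bd ω
    | succ n ih =>
      intro ω
      calc |convPow f (n+1) ω| = |∫ t : ℝ, f t * convPow f n (ω - t)| := rfl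
        _ ≤ I * (I ^ n * M) := conv_bound_aux f (convPow f n) hf_int (I ^ n * M) ih ω
        _ = I ^ (n+1) * M := by ring
  -- continuity of the higher self-convolutions
  have hcont : ∀ n : ℕ, Continuous (convPow f (n+1)) := by
    intro n
    induction n with
    | zero =>
      exact conv_cont_aux f f hf_int hf_meas M hf_bd {0, ω₀}
        ((measurableSet_singleton ω₀).insert 0)
        (((Set.finite_singleton ω₀).insert 0).measure_zero volume) hf_cont
    | succ n ih =>
      exact conv_cont_aux f (convPow f (n+1)) hf_int ih.measurable (I ^ (n+1) * M)
        (hbound (n+1)) ∅ MeasurableSet.empty measure_empty (fun x _ => ih.continuousAt)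
  refine ⟨?_, ?_⟩
  · intro n hn
    obtain ⟨m, rfl⟩ : ∃ m, n = m + 1 := ⟨n - 1, (Nat.succ_pred_eq_of_pos hn).symm⟩
    exact (hcont m).continuousOn
  -- summability
  have hfacpos : ∀ n : ℕ, (0:ℝ) < ((n + 1).factorial : ℝ) := fun n =>
    Nat.cast_pos.mpr (Nat.factorial_pos _)
  set u : ℕ → ℝ := fun n => I ^ n * M / ((n + 1).factorial : ℝ) with hudef
  have hu : Summable u := by
    apply Summable.of_nonneg_of_le
      (fun n => div_nonneg (mul_nonneg (pow_nonneg hI0 n) hM0) (hfacpos n).le)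
      (fun n => ?_) ((Real.summable_pow_div_factorial I).mul_right M)
    have h1 : I ^ n * M / ((n + 1).factorial : ℝ) ≤ I ^ n * M / ((n).factorial : ℝ) := by
      apply div_le_div_of_nonneg_left (mul_nonneg (pow_nonneg hI0 n) hM0)
        (Nat.cast_pos.mpr (Nat.factorial_pos _))
      exact_mod_cast Nat.factorial_le (Nat.le_succ n)
    calc u n ≤ I ^ n * M / ((n).factorial : ℝ) := h1
      _ = I ^ n / ((n).factorial : ℝ) * M := by ring
  have hterm_bd : ∀ n : ℕ, ∀ ω, |convPow f n ω / ((n + 1).factorial : ℝ)| ≤ u n := by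
    intro n ω
    rw [abs_div, abs_of_pos (hfacpos n)]
    show |convPow f n ω| / ((n + 1).factorial : ℝ) ≤ I ^ n * M / ((n + 1).factorial : ℝ)
    gcongr
    exact hbound n ω
  have hsum : ∀ ω, Summable (fun n : ℕ => convPow f n ω / ((n + 1).factorial : ℝ)) :=
    fun ω => Summable.of_norm_bounded hu (fun n => by
      rw [Real.norm_eq_abs]; exact hterm_bd n ω)
  -- the continuous part of the sum
  set h : ℝ → ℝ := fun ω => ∑' n : ℕ, convPow f (n+1) ω / (((n+1) + 1).factorial : ℝ) with hhdef
  have hg' : ∀ ω, g ω = Real.exp (-w₁) * (f ω + h ω) := by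
    intro ω
    rw [hg ω, (hsum ω).tsum_eq_zero_add]
    have h0 : convPow f 0 ω / (((0:ℕ) + 1).factorial : ℝ) = f ω := by
      norm_num [convPow]
    rw [h0, hhdef]
  have hcontH : Continuous h := by
    apply continuous_tsum (fun n => (hcont n).div_const _) ((summable_nat_add_iff 1).mpr hu)
    intro n x
    rw [Real.norm_eq_abs]
    exact hterm_bd (n+1) x
  -- one-sided limits of `f` at `ω₀`
  have hfm : Tendsto f (nhdsWithin ω₀ (Set.Iio ω₀)) (nhds (b * P 1)) := by
    have heq : f =ᶠ[nhdsWithin ω₀ (Set.Iio ω₀)] fc := by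
      filter_upwards [Ioo_mem_nhdsLT hω₀] with y hy
      rw [hf_eq y, Set.indicator_of_mem hy]
    have hfc0 : fc ω₀ = b * P 1 := by
      simp [hfcdef, hQdef, div_self hω₀.ne']
    have : Tendsto fc (nhdsWithin ω₀ (Set.Iio ω₀)) (nhds (b * P 1)) := by
      rw [← hfc0]
      exact (hfc.continuousAt.tendsto).mono_left nhdsWithin_le_nhds
    exact this.congr' heq.symm
  have hfp : Tendsto f (nhdsWithin ω₀ (Set.Ioi ω₀)) (nhds 0) := by
    have heq : f =ᶠ[nhdsWithin ω₀ (Set.Ioi ω₀)] fun _ => (0:ℝ) := by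
      filter_upwards [self_mem_nhdsWithin] with y hy
      rw [hf, if_neg]
      exact fun hmem => absurd hmem.2 (not_lt.mpr (le_of_lt hy))
    exact (tendsto_congr' heq).mpr tendsto_const_nhds
  have hgeq : g = fun ω => Real.exp (-w₁) * (f ω + h ω) := funext hg'
  refine ⟨Real.exp (-w₁) * (b * P 1 + h ω₀), Real.exp (-w₁) * (0 + h ω₀), ?_, ?_, by ring⟩
  · rw [hgeq]
    exact tendsto_const_nhds.mul
      (hfm.add ((hcontH.tendsto ω₀).mono_left nhdsWithin_le_nhds))
  · rw [hgeq]
    exact tendsto_const_nhds.mul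
      (hfp.add ((hcontH.tendsto ω₀).mono_left nhdsWithin_le_nhds))
end

section
/- Asymptotics of the Bethe–Heitler Mellin exponent: μ(s) = ∫_0^1 (1 − z^{s−1})/(1 − z) · W_BH(1−z) dz = ln s + γ_E + ∫_0^1 (W_BH(z') − W_BH(0))/z' dz' + O(1/s) as s → +∞, and for W_BH(z) = 1 − z + (3/4)z² the constant ∫_0^1 (W_BH(z')−1)/z' dz' = −5/8, giving the effective cutoff κ = e^{-5/8}. -/
open MeasureTheory Real Filter

/-- The completely screened ultra-relativistic Bethe–Heitler profile
`W_BH(z) = 1 − z + (3/4)z²`. -/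
noncomputable def W_BH (z : ℝ) : ℝ := 1 - z + 3 / 4 * z ^ 2

/-- The Bethe–Heitler Mellin exponent
`μ(s) = ∫_0^1 (1 − z^{s−1})/(1 − z) · W_BH(1−z) dz`. -/
noncomputable def muBH (s : ℝ) : ℝ :=
  ∫ z in Set.Ioo (0:ℝ) 1, (1 - z ^ (s - 1)) / (1 - z) * W_BH (1 - z)

/-! ### Auxiliary lemmas -/

noncomputable def gI (s : ℝ) (z : ℝ) : ℝ := (1 - z ^ (s - 1)) / (1 - z)

lemma gI_nonneg {s z : ℝ} (hs : 2 ≤ s) (hz : z ∈ Set.Ioo (0:ℝ) 1) : 0 ≤ gI s z := by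
  have h1 : z ^ (s - 1) ≤ 1 := Real.rpow_le_one hz.1.le hz.2.le (by linarith)
  have h2 : (0:ℝ) < 1 - z := by linarith [hz.2]
  exact div_nonneg (by linarith) h2.le

lemma gI_le {s z : ℝ} (hs : 2 ≤ s) (hz : z ∈ Set.Ioo (0:ℝ) 1) : gI s z ≤ s - 1 := by
  have h2 : (0:ℝ) < 1 - z := by linarith [hz.2]
  have hb : 1 + (s - 1) * (z - 1) ≤ (1 + (z - 1)) ^ (s - 1) :=
    one_add_mul_self_le_rpow_one_add (by linarith [hz.1]) (by linarith)
  rw [show 1 + (z - 1) = z by ring] at hb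
  rw [gI, div_le_iff₀ h2]
  nlinarith
lemma gI_continuousOn (s : ℝ) : ContinuousOn (gI s) (Set.Ioo (0:ℝ) 1) := by
  unfold gI
  apply ContinuousOn.div
  · exact continuousOn_const.sub (fun z hz =>
      (Real.continuousAt_rpow_const z _ (Or.inl hz.1.ne')).continuousWithinAt)
  · exact continuousOn_const.sub continuousOn_id
  · intro z hz; simp only [Set.mem_Ioo] at hz; intro h; linarith [sub_eq_zero.mp h]

lemma gI_integrableOn {s : ℝ} (hs : 2 ≤ s) : IntegrableOn (gI s) (Set.Ioo (0:ℝ) 1) := by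
  refine ⟨(gI_continuousOn s).aestronglyMeasurable measurableSet_Ioo,
    HasFiniteIntegral.restrict_of_bounded (s - 1) measure_Ioo_lt_top ?_⟩
  filter_upwards [ae_restrict_mem measurableSet_Ioo] with z hz
  rw [Real.norm_eq_abs, abs_of_nonneg (gI_nonneg hs hz)]
  exact gI_le hs hz

lemma gI_mono {s t : ℝ} (hs : 2 ≤ s) (hst : s ≤ t) :
    (∫ z in Set.Ioo (0:ℝ) 1, gI s z) ≤ ∫ z in Set.Ioo (0:ℝ) 1, gI t z := by
  refine setIntegral_mono_on (gI_integrableOn hs) (gI_integrableOn (hs.trans hst))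
    measurableSet_Ioo (fun z hz => ?_)
  have h2 : (0:ℝ) < 1 - z := by linarith [hz.2]
  have : z ^ (t - 1) ≤ z ^ (s - 1) :=
    Real.rpow_le_rpow_of_exponent_ge hz.1 hz.2.le (by linarith)
  unfold gI
  gcongr
lemma gI_nat (m : ℕ) : ∫ z in Set.Ioo (0:ℝ) 1, gI ((m:ℝ)+1) z = (harmonic m : ℝ) := by
  have h1 : ∀ z ∈ Set.Ioo (0:ℝ) 1, gI ((m:ℝ)+1) z = ∑ k ∈ Finset.range m, z ^ k := by
    intro z hz
    rw [geom_sum_eq (ne_of_lt hz.2), gI, add_sub_cancel_right, Real.rpow_natCast,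
      ← neg_sub (z^m) 1, ← neg_sub z 1, neg_div_neg_eq]
  rw [setIntegral_congr_fun measurableSet_Ioo h1, ← integral_Ioc_eq_integral_Ioo,
    ← intervalIntegral.integral_of_le zero_le_one,
    intervalIntegral.integral_finset_sum (fun k _ => intervalIntegral.intervalIntegrable_pow k)]
  simp only [integral_pow, one_pow, zero_pow (Nat.succ_ne_zero _)]
  rw [harmonic]
  push_cast
  refine Finset.sum_congr rfl (fun k _ => ?_)
  rw [sub_zero, one_div]
lemma key {s : ℝ} (hs : 4 ≤ s) :
    |(∫ z in Set.Ioo (0:ℝ) 1, gI s z) - Real.log s - Real.eulerMascheroniConstant| ≤ 4 / s := by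
  have hs0 : (0:ℝ) < s := by linarith
  obtain ⟨m, hnm⟩ : ∃ m, ⌊s⌋₊ = m + 1 := ⟨⌊s⌋₊ - 1, by
    have : 4 ≤ ⌊s⌋₊ := Nat.le_floor (by exact_mod_cast hs); omega⟩
  have hn4 : 4 ≤ m + 1 := by
    have : 4 ≤ ⌊s⌋₊ := Nat.le_floor (by exact_mod_cast hs); omega
  have hm3 : 3 ≤ m := by omega
  have hns : ((m:ℝ) + 1) ≤ s := by
    have := Nat.floor_le (R := ℝ) (a := s) hs0.le; rw [hnm] at this; push_cast at this; linarith
  have hsn : s < (m:ℝ) + 2 := by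
    have := Nat.lt_floor_add_one s; rw [hnm] at this; push_cast at this; linarith
  have hm0 : (0:ℝ) < m := by exact_mod_cast (by omega : 0 < m)
  -- integral bounds
  have hlow : (harmonic m : ℝ) ≤ ∫ z in Set.Ioo (0:ℝ) 1, gI s z := by
    rw [← gI_nat m]; exact gI_mono (by push_cast; linarith) hns
  have hhigh : (∫ z in Set.Ioo (0:ℝ) 1, gI s z) ≤ (harmonic (m+1) : ℝ) := by
    rw [← gI_nat (m+1)]; exact gI_mono (by linarith) (by push_cast; linarith)
  -- gamma bounds
  have hg1 : (harmonic (m+1) : ℝ) - Real.log ((m:ℝ)+2) < Real.eulerMascheroniConstant := by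
    have := Real.eulerMascheroniSeq_lt_eulerMascheroniConstant (m+1)
    rw [Real.eulerMascheroniSeq] at this; push_cast at this
    rw [show (m:ℝ)+1+1 = (m:ℝ)+2 by ring] at this; linarith
  have hg2 : Real.eulerMascheroniConstant < (harmonic m : ℝ) - Real.log m := by
    have := Real.eulerMascheroniConstant_lt_eulerMascheroniSeq' m
    rw [Real.eulerMascheroniSeq', if_neg (by omega)] at this; linarith
  -- log inequalities
  have hlog1 : Real.log ((m:ℝ)+2) - Real.log ((m:ℝ)+1) ≤ 1 / ((m:ℝ)+1) := by
    have h := Real.log_le_sub_one_of_pos (x := ((m:ℝ)+2)/((m:ℝ)+1)) (by positivity)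
    rw [Real.log_div (by positivity) (by positivity)] at h
    have : ((m:ℝ)+2)/((m:ℝ)+1) - 1 = 1/((m:ℝ)+1) := by field_simp; ring
    linarith
  have hlog2 : Real.log ((m:ℝ)+2) - Real.log m ≤ 2 / (m:ℝ) := by
    have h := Real.log_le_sub_one_of_pos (x := ((m:ℝ)+2)/(m:ℝ)) (by positivity)
    rw [Real.log_div (by positivity) (by positivity)] at h
    have : ((m:ℝ)+2)/(m:ℝ) - 1 = 2/(m:ℝ) := by field_simp; ring
    linarith
  -- log s monotone
  have hls1 : Real.log ((m:ℝ)+1) ≤ Real.log s := Real.log_le_log (by positivity) hns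
  have hls2 : Real.log s ≤ Real.log ((m:ℝ)+2) := Real.log_le_log hs0 hsn.le
  -- div comparisons
  have hd1 : 1 / ((m:ℝ)+1) ≤ 4 / s := by
    rw [div_le_div_iff₀ (by positivity) hs0]; nlinarith
  have hd2 : 2 / (m:ℝ) ≤ 4 / s := by
    rw [div_le_div_iff₀ hm0 hs0]; nlinarith
  rw [abs_le]
  constructor <;> linarith
lemma rpow_int_one : ∀ s : ℝ, 2 ≤ s → ∫ z in (0:ℝ)..1, z ^ (s-1) = 1/s := by
  intro s hs
  rw [integral_rpow (Or.inl (by linarith : (-1:ℝ) < s - 1))]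
  rw [Real.one_rpow, Real.zero_rpow (by linarith : s - 1 + 1 ≠ 0)]
  rw [show s - 1 + 1 = s by ring]
  norm_num

lemma hfun_integrableOn {s : ℝ} (hs : 2 ≤ s) :
    IntegrableOn (fun z => (1 - z ^ (s-1)) * (-(1/4) - 3/4*z)) (Set.Ioo (0:ℝ) 1) := by
  have hcont : ContinuousOn (fun z : ℝ => (1 - z ^ (s-1)) * (-(1/4) - 3/4*z)) (Set.Ioo (0:ℝ) 1) := by
    apply ContinuousOn.mul
    · exact continuousOn_const.sub (fun z hz =>
        (Real.continuousAt_rpow_const z _ (Or.inl hz.1.ne')).continuousWithinAt)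
    · fun_prop
  refine ⟨hcont.aestronglyMeasurable measurableSet_Ioo,
    HasFiniteIntegral.restrict_of_bounded 1 measure_Ioo_lt_top ?_⟩
  filter_upwards [ae_restrict_mem measurableSet_Ioo] with z hz
  have h1 : 0 ≤ z ^ (s-1) := Real.rpow_nonneg hz.1.le _
  have h2 : z ^ (s-1) ≤ 1 := Real.rpow_le_one hz.1.le hz.2.le (by linarith)
  rw [Real.norm_eq_abs, abs_mul]
  have : |1 - z ^ (s-1)| ≤ 1 := by rw [abs_le]; constructor <;> linarith
  have h3 : |(-(1/4) - 3/4*z)| ≤ 1 := by rw [abs_le]; constructor <;> nlinarith [hz.1, hz.2]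
  nlinarith [abs_nonneg (1 - z ^ (s-1)), abs_nonneg (-(1/4) - 3/4*z)]

lemma muBH_eq {s : ℝ} (hs : 2 ≤ s) :
    muBH s = (∫ z in Set.Ioo (0:ℝ) 1, gI s z) + (-(5/8) + 1/(4*s) + 3/(4*(s+1))) := by
  have hcong : muBH s = ∫ z in Set.Ioo (0:ℝ) 1,
      (gI s z + (1 - z ^ (s-1)) * (-(1/4) - 3/4*z)) := by
    refine setIntegral_congr_fun measurableSet_Ioo (fun z hz => ?_)
    have h2 : (1:ℝ) - z ≠ 0 := by have := hz.2; intro h; linarith [sub_eq_zero.mp h]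
    simp only [W_BH, gI]
    field_simp
    ring
  rw [hcong, integral_add (gI_integrableOn hs) (hfun_integrableOn hs)]
  congr 1
  have hcong2 : ∫ z in Set.Ioo (0:ℝ) 1, (1 - z ^ (s-1)) * (-(1/4) - 3/4*z)
      = ∫ z in Set.Ioo (0:ℝ) 1, (-(1/4) - 3/4*z + 1/4*z^(s-1) + 3/4*z^s) := by
    refine setIntegral_congr_fun measurableSet_Ioo (fun z hz => ?_)
    have : z ^ s = z ^ (s-1) * z := by
      nth_rewrite 1 [show s = s - 1 + 1 by ring]
      exact Real.rpow_add_one hz.1.ne' _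
    rw [this]; ring
  rw [hcong2, ← integral_Ioc_eq_integral_Ioo, ← intervalIntegral.integral_of_le zero_le_one]
  have i1 : IntervalIntegrable (fun z : ℝ => z ^ (s-1)) volume 0 1 :=
    intervalIntegral.intervalIntegrable_rpow (Or.inl (by linarith))
  have i2 : IntervalIntegrable (fun z : ℝ => z ^ s) volume 0 1 :=
    intervalIntegral.intervalIntegrable_rpow (Or.inl (by linarith))
  have i3 : IntervalIntegrable (fun z : ℝ => -(1/4) - 3/4*z) volume 0 1 := by
    apply IntervalIntegrable.sub intervalIntegrable_const
    exact intervalIntegral.intervalIntegrable_id.const_mul _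
  rw [intervalIntegral.integral_add (i3.add (i1.const_mul _)) (i2.const_mul _),
    intervalIntegral.integral_add i3 (i1.const_mul _),
    intervalIntegral.integral_sub intervalIntegrable_const
      (intervalIntegral.intervalIntegrable_id.const_mul _),
    intervalIntegral.integral_const_mul, intervalIntegral.integral_const_mul,
    intervalIntegral.integral_const_mul, integral_id,
    intervalIntegral.integral_const, rpow_int_one s hs]
  have e2 : ∫ z in (0:ℝ)..1, z ^ s = 1/(s+1) := by
    rw [integral_rpow (Or.inl (by linarith : (-1:ℝ) < s))]
    rw [Real.one_rpow, Real.zero_rpow (by linarith : s + 1 ≠ 0)]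
    norm_num
  rw [e2]
  field_simp
  ring

lemma part1 : ∫ z in Set.Ioo (0:ℝ) 1, (W_BH z - W_BH 0) / z = -(5 / 8) := by
  have h1 : ∫ z in Set.Ioo (0:ℝ) 1, (W_BH z - W_BH 0) / z
      = ∫ z in Set.Ioo (0:ℝ) 1, (3 / 4 * z - 1) := by
    refine setIntegral_congr_fun measurableSet_Ioo (fun z hz => ?_)
    have hz0 : z ≠ 0 := ne_of_gt hz.1
    simp only [W_BH]
    field_simp
    ring
  rw [h1, ← integral_Ioc_eq_integral_Ioo,
    ← intervalIntegral.integral_of_le (by norm_num : (0:ℝ) ≤ 1)]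
  have : ∫ z in (0:ℝ)..1, (3 / 4 * z - 1) = 3 / 4 * (1 ^ 2 / 2) - 1 := by
    rw [intervalIntegral.integral_sub ((intervalIntegral.intervalIntegrable_id).const_mul _)
      intervalIntegrable_const, intervalIntegral.integral_const_mul, integral_id,
      intervalIntegral.integral_const]
    norm_num
  rw [this]; norm_num

/-- Asymptotics of the Bethe–Heitler Mellin exponent. -/
theorem betheHeitler_mellin_asymptotics :
    (∫ z in Set.Ioo (0:ℝ) 1, (W_BH z - W_BH 0) / z = -(5 / 8)) ∧
    ((fun s : ℝ => muBH s -
        (Real.log s + Real.eulerMascheroniConstant +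
          ∫ z in Set.Ioo (0:ℝ) 1, (W_BH z - W_BH 0) / z)) =O[atTop]
      (fun s : ℝ => 1 / s)) ∧
    Real.exp (∫ z in Set.Ioo (0:ℝ) 1, (W_BH z - W_BH 0) / z) =
      Real.exp (-(5 / 8)) := by
  refine ⟨part1, ?_, by rw [part1]⟩
  rw [Asymptotics.isBigO_iff]
  refine ⟨5, ?_⟩
  filter_upwards [eventually_ge_atTop (4:ℝ)] with s hs
  have hs0 : (0:ℝ) < s := by linarith
  rw [part1, muBH_eq (by linarith : 2 ≤ s), Real.norm_eq_abs, Real.norm_eq_abs,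
    abs_of_pos (by positivity : (0:ℝ) < 1/s)]
  have hk := key hs
  have e : (∫ z in Set.Ioo (0:ℝ) 1, gI s z) + (-(5/8) + 1/(4*s) + 3/(4*(s+1)))
      - (Real.log s + Real.eulerMascheroniConstant + -(5/8))
      = ((∫ z in Set.Ioo (0:ℝ) 1, gI s z) - Real.log s - Real.eulerMascheroniConstant)
        + (1/(4*s) + 3/(4*(s+1))) := by ring
  rw [e]
  have hb : |1/(4*s) + 3/(4*(s+1))| ≤ 1/s := by
    rw [abs_of_pos (by positivity)]
    have h1 : 3/(4*(s+1)) ≤ 3/(4*s) := by gcongr; linarith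
    have h2 : 1/(4*s) + 3/(4*s) = 1/s := by
      rw [← add_div, show (1:ℝ) + 3 = 4 by norm_num,
        ← div_div, div_self (by norm_num : (4:ℝ) ≠ 0), one_div]
    linarith
  calc |((∫ z in Set.Ioo (0:ℝ) 1, gI s z) - Real.log s - Real.eulerMascheroniConstant)
        + (1/(4*s) + 3/(4*(s+1)))|
      ≤ |(∫ z in Set.Ioo (0:ℝ) 1, gI s z) - Real.log s - Real.eulerMascheroniConstant|
        + |1/(4*s) + 3/(4*(s+1))| := abs_add_le _ _
    _ ≤ 4/s + 1/s := add_le_add hk hb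
    _ = 5 * (1/s) := by field_simp; ring
end
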